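/- Let d ≥ 1 be an integer and let 0 < α < 1, λ > 0, ρ, M > 0, 0 < γ ≤ 1, ε ≥ 0, K ≥ 1, τ₁ > 0 be real numbers with γ ≤ λ/4, ε ≤ λ/4 and ε·M ≤ 1/4. Let O ⊆ ℝ^d be Lebesgue measurable and let ω : O → ℝ^d satisfy ‖ω(ξ)‖ ≤ ρ for all ξ ∈ O and ‖ξ − η‖ ≤ M·‖ω(ξ) − ω(η)‖ for all ξ, η ∈ O. For each n ∈ ℤ let Ω_n : O → ℝ satisfy |Ω_n(ξ) − |n|^α − λ| ≤ ε for all ξ ∈ O and |Ω_n(ξ) − Ω_n(η)| ≤ ε·‖ξ − η‖ for all ξ, η ∈ O. Then there is a constant C depending only on d, α, λ, ρ and M such that meas(⋃_{k ∈ ℤ^d, ‖k‖_∞ ≤ K} ⋃_{n ∈ ℤ} {ξ ∈ O : |⟨k, ω(ξ)⟩ + Ω_n(ξ)| ≤ γ·K^{−2τ₁}}) ≤ C·γ^{1/2}·K^{−(τ₁ − d − 2/α)}. -/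

import Mathlib

open MeasureTheory

open Metric Pointwise RealInnerProductSpace in
lemma translate_bound {d : ℕ} (A : Set (EuclideanSpace ℝ (Fin d)))
    (w : EuclideanSpace ℝ (Fin d)) (c R : ℝ) (hc : 0 < c) (N : ℕ)
    (hsep : ∀ i j : ℕ, i ≤ N → j ≤ N → i ≠ j → ∀ a ∈ A, ∀ b ∈ A,
      c ≤ ‖(a + (i:ℝ) • w) - (b + (j:ℝ) • w)‖)
    (hsub : ∀ i : ℕ, i ≤ N → ∀ a ∈ A, ‖a + (i:ℝ) • w‖ ≤ R) :
    ((N:ENNReal) + 1) * volume A ≤ volume (ball (0 : EuclideanSpace ℝ (Fin d)) (R + c)) := by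
  set Ai : ℕ → Set (EuclideanSpace ℝ (Fin d)) := fun i => ((i:ℝ) • w) +ᵥ A with hAi
  set U : ℕ → Set (EuclideanSpace ℝ (Fin d)) := fun i => thickening (c/3) (Ai i) with hU
  have hmemAi : ∀ i (x : EuclideanSpace ℝ (Fin d)), x ∈ Ai i ↔ ∃ a ∈ A, x = a + (i:ℝ) • w := by
    intro i x
    constructor
    · rintro ⟨a, ha, rfl⟩
      exact ⟨a, ha, by show (i:ℝ)•w +ᵥ a = a + (i:ℝ)•w; rw [vadd_eq_add]; abel⟩
    · rintro ⟨a, ha, rfl⟩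
      exact ⟨a, ha, by show (i:ℝ)•w +ᵥ a = a + (i:ℝ)•w; rw [vadd_eq_add]; abel⟩
  have hdisj : ∀ i ∈ Finset.range (N+1), ∀ j ∈ Finset.range (N+1), i ≠ j →
      Disjoint (U i) (U j) := by
    intro i hi j hj hij
    rw [Set.disjoint_left]
    intro x hxi hxj
    rw [hU, mem_thickening_iff] at hxi hxj
    obtain ⟨y, hy, hxy⟩ := hxi
    obtain ⟨z, hz, hxz⟩ := hxj
    obtain ⟨a, ha, rfl⟩ := (hmemAi i y).mp hy
    obtain ⟨b, hb, rfl⟩ := (hmemAi j z).mp hz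
    have h1 : c ≤ ‖(a + (i:ℝ)•w) - (b + (j:ℝ)•w)‖ :=
      hsep i j (Nat.lt_succ_iff.mp (Finset.mem_range.mp hi))
        (Nat.lt_succ_iff.mp (Finset.mem_range.mp hj)) hij a ha b hb
    have h2 : dist (a + (i:ℝ)•w) (b + (j:ℝ)•w) < 2*(c/3) := by
      calc dist (a + (i:ℝ)•w) (b + (j:ℝ)•w)
          ≤ dist (a + (i:ℝ)•w) x + dist x (b + (j:ℝ)•w) := dist_triangle _ _ _
        _ < c/3 + c/3 := by rw [dist_comm (a + (i:ℝ)•w) x]; linarith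
        _ = 2*(c/3) := by ring
    rw [dist_eq_norm] at h2
    linarith
  have hUsub : ∀ i ∈ Finset.range (N+1), U i ⊆ ball (0 : EuclideanSpace ℝ (Fin d)) (R + c) := by
    intro i hi x hx
    rw [hU, mem_thickening_iff] at hx
    obtain ⟨y, hy, hxy⟩ := hx
    obtain ⟨a, ha, rfl⟩ := (hmemAi i y).mp hy
    have hR := hsub i (Nat.lt_succ_iff.mp (Finset.mem_range.mp hi)) a ha
    rw [mem_ball, dist_zero_right]
    have htri : ‖x‖ ≤ ‖x - (a + (i:ℝ)•w)‖ + ‖a + (i:ℝ)•w‖ := by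
      calc ‖x‖ = ‖(x - (a + (i:ℝ)•w)) + (a + (i:ℝ)•w)‖ := by rw [sub_add_cancel]
        _ ≤ _ := norm_add_le _ _
    rw [dist_eq_norm] at hxy
    linarith
  have hvol : ∀ i, volume (Ai i) = volume A := fun i => measure_vadd volume _ A
  calc ((N:ENNReal) + 1) * volume A
      = ∑ i ∈ Finset.range (N+1), volume (Ai i) := by
        simp [hvol, Finset.sum_const, Finset.card_range]
    _ ≤ ∑ i ∈ Finset.range (N+1), volume (U i) := by
        refine Finset.sum_le_sum fun i _ => measure_mono ?_
        exact self_subset_thickening (by linarith) _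
    _ = volume (⋃ i ∈ Finset.range (N+1), U i) :=
        (measure_biUnion_finset hdisj (fun i _ => isOpen_thickening.measurableSet)).symm
    _ ≤ volume (ball (0 : EuclideanSpace ℝ (Fin d)) (R + c)) :=
        measure_mono (Set.iUnion₂_subset hUsub)

open Metric Pointwise RealInnerProductSpace in
lemma slab_bound {d : ℕ} (A : Set (EuclideanSpace ℝ (Fin d)))
    (kv : EuclideanSpace ℝ (Fin d)) (hk1 : 1 ≤ ‖kv‖) (δ ρ : ℝ) (hδ : 0 < δ) (hρ : 0 < ρ)
    (hA : ∀ a ∈ A, ‖a‖ ≤ ρ)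
    (hsep : ∀ a ∈ A, ∀ b ∈ A, |⟪kv, a - b⟫| ≤ 2*δ + ‖a-b‖/4) :
    volume A ≤ ENNReal.ofReal (3*δ/ρ) *
      volume (ball (0 : EuclideanSpace ℝ (Fin d)) (2*ρ + 3*δ)) := by
  have hkpos : (0:ℝ) < ‖kv‖ := lt_of_lt_of_le one_pos hk1
  obtain ⟨L, hL⟩ : ∃ L : ℝ, L = 3*δ := ⟨_, rfl⟩
  have hLpos : 0 < L := by rw [hL]; positivity
  set u : EuclideanSpace ℝ (Fin d) := ‖kv‖⁻¹ • kv with hu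
  have hnu : ‖u‖ = 1 := by
    rw [hu, norm_smul, norm_inv, norm_norm]
    field_simp
  have hinneru : ⟪kv, u⟫ = ‖kv‖ := by
    rw [hu, real_inner_smul_right, real_inner_self_eq_norm_sq]
    field_simp
  set w : EuclideanSpace ℝ (Fin d) := L • u with hw
  have hnw : ‖w‖ = L := by rw [hw, norm_smul, hnu]; simp [abs_of_pos hLpos]
  have hinnerw : ⟪kv, w⟫ = L * ‖kv‖ := by rw [hw, real_inner_smul_right, hinneru]
  set N : ℕ := ⌊ρ / L⌋₊ with hN
  have hkey : ∀ i j : ℕ, i ≤ N → j ≤ N → i ≠ j → ∀ a ∈ A, ∀ b ∈ A,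
      L/15 ≤ ‖(a + (i:ℝ) • w) - (b + (j:ℝ) • w)‖ := by
    intro i j _ _ hij a ha b hb
    set r : ℝ := ‖(a + (i:ℝ) • w) - (b + (j:ℝ) • w)‖ with hr
    have hrnn : 0 ≤ r := norm_nonneg _
    set m : ℝ := |(i:ℝ) - (j:ℝ)| with hm
    have hm1 : 1 ≤ m := by
      have h0 : (i:ℤ) - (j:ℤ) ≠ 0 := sub_ne_zero.mpr (by exact_mod_cast hij)
      have h1 : (1:ℤ) ≤ |(i:ℤ) - (j:ℤ)| := Int.one_le_abs h0
      rw [hm]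
      calc (1:ℝ) ≤ ((|(i:ℤ) - (j:ℤ)| : ℤ) : ℝ) := by exact_mod_cast h1
        _ = |(i:ℝ) - (j:ℝ)| := by push_cast; ring_nf
    have hinnerv : ⟪kv, (a + (i:ℝ) • w) - (b + (j:ℝ) • w)⟫
        = ⟪kv, a - b⟫ + ((i:ℝ) - (j:ℝ)) * (L * ‖kv‖) := by
      simp only [inner_sub_right, inner_add_right, real_inner_smul_right, hinnerw]
      ring
    have hCS : |⟪kv, (a + (i:ℝ) • w) - (b + (j:ℝ) • w)⟫| ≤ ‖kv‖ * r :=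
      abs_real_inner_le_norm _ _
    have hab : ‖a - b‖ ≤ r + m * L := by
      have : a - b = ((a + (i:ℝ) • w) - (b + (j:ℝ) • w)) - (((i:ℝ) - (j:ℝ)) • w) := by
        rw [sub_smul]; abel
      rw [this]
      calc ‖_ - _‖ ≤ r + ‖((i:ℝ) - (j:ℝ)) • w‖ := norm_sub_le _ _
        _ = r + m * L := by rw [norm_smul, hnw, Real.norm_eq_abs]
    have hsepab := hsep a ha b hb
    have hmain : m * L * ‖kv‖ ≤ ‖kv‖ * r + 2*δ + (r + m*L)/4 := by
      have h2 : m * (L * ‖kv‖) = |((i:ℝ) - (j:ℝ)) * (L * ‖kv‖)| := by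
        rw [abs_mul, hm, abs_of_pos (by positivity : (0:ℝ) < L * ‖kv‖)]
      have h3 : |((i:ℝ) - (j:ℝ)) * (L * ‖kv‖)| ≤
          |⟪kv, (a + (i:ℝ) • w) - (b + (j:ℝ) • w)⟫| + |⟪kv, a - b⟫| := by
        rw [hinnerv]
        calc |((i:ℝ) - (j:ℝ)) * (L * ‖kv‖)|
            = |(⟪kv, a - b⟫ + ((i:ℝ) - (j:ℝ)) * (L * ‖kv‖)) - ⟪kv, a - b⟫| := by ring_nf
          _ ≤ _ := abs_sub _ _
      nlinarith [hsepab, hCS, hab]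
    have hδL : 2*δ = (2/3) * L := by rw [hL]; ring
    nlinarith [mul_le_mul_of_nonneg_left hk1 (le_of_lt (by positivity : (0:ℝ) < m * L)),
      mul_le_mul_of_nonneg_left hk1 hrnn, hm1, hkpos, hLpos, hrnn,
      mul_le_mul_of_nonneg_right hm1 (le_of_lt hLpos)]
  have hsub : ∀ i : ℕ, i ≤ N → ∀ a ∈ A, ‖a + (i:ℝ) • w‖ ≤ 2*ρ := by
    intro i hi a ha
    have h1 : ‖a + (i:ℝ) • w‖ ≤ ‖a‖ + (i:ℝ) * L := by
      calc ‖a + (i:ℝ) • w‖ ≤ ‖a‖ + ‖(i:ℝ) • w‖ := norm_add_le _ _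
        _ = ‖a‖ + (i:ℝ) * L := by rw [norm_smul, hnw, Real.norm_natCast]
    have h2 : (i:ℝ) * L ≤ (N:ℝ) * L := by
      apply mul_le_mul_of_nonneg_right _ (le_of_lt hLpos); exact_mod_cast hi
    have h3 : (N:ℝ) * L ≤ ρ := by
      have := Nat.floor_le (by positivity : (0:ℝ) ≤ ρ / L)
      calc (N:ℝ) * L ≤ (ρ/L) * L := mul_le_mul_of_nonneg_right this (le_of_lt hLpos)
        _ = ρ := by field_simp
    have := hA a ha
    linarith
  have hmain := translate_bound A w (L/15) (2*ρ) (by positivity) N hkey hsub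
  have hball : volume (ball (0 : EuclideanSpace ℝ (Fin d)) (2*ρ + L/15)) ≤
      volume (ball (0 : EuclideanSpace ℝ (Fin d)) (2*ρ + 3*δ)) := by
    apply measure_mono; apply ball_subset_ball; rw [hL]; linarith
  have hlow : ENNReal.ofReal (ρ/L) * volume A ≤ ((N:ENNReal) + 1) * volume A := by
    apply mul_le_mul_left
    calc ENNReal.ofReal (ρ/L) ≤ ENNReal.ofReal ((N:ℝ) + 1) :=
          ENNReal.ofReal_le_ofReal (le_of_lt (Nat.lt_floor_add_one _))
      _ = (N:ENNReal) + 1 := by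
          rw [ENNReal.ofReal_add (Nat.cast_nonneg N) zero_le_one,
            ENNReal.ofReal_natCast, ENNReal.ofReal_one]
  subst hL
  calc volume A = (ENNReal.ofReal ((3*δ)/ρ) * ENNReal.ofReal (ρ/(3*δ))) * volume A := by
        rw [← ENNReal.ofReal_mul (by positivity)]
        rw [show (3*δ)/ρ * (ρ/(3*δ)) = 1 by field_simp]
        simp
    _ = ENNReal.ofReal ((3*δ)/ρ) * (ENNReal.ofReal (ρ/(3*δ)) * volume A) := by ring
    _ ≤ ENNReal.ofReal ((3*δ)/ρ) * (((N:ENNReal) + 1) * volume A) := mul_le_mul_right hlow _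
    _ ≤ ENNReal.ofReal ((3*δ)/ρ) * volume (ball (0 : EuclideanSpace ℝ (Fin d)) (2*ρ + (3*δ)/15)) :=
        mul_le_mul_right hmain _
    _ ≤ ENNReal.ofReal (3*δ/ρ) * volume (ball (0 : EuclideanSpace ℝ (Fin d)) (2*ρ + 3*δ)) := by
        have : (3*δ)/ρ = 3*δ/ρ := by ring
        rw [this]
        exact mul_le_mul_right hball _

open Metric Pointwise RealInnerProductSpace in
lemma lip_image_vol {d : ℕ} {g : EuclideanSpace ℝ (Fin d) → EuclideanSpace ℝ (Fin d)}
    {T : Set (EuclideanSpace ℝ (Fin d))} {M : NNReal} (h : LipschitzOnWith M g T) :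
    volume (g '' T) ≤ (M : ENNReal) ^ (d : ℝ) * volume T := by
  set E := EuclideanSpace ℝ (Fin d)
  have hHaar : Measure.IsAddHaarMeasure (μH[(d:ℝ)] : Measure E) := by
    have := MeasureTheory.isAddHaarMeasure_hausdorffMeasure (E := E)
    simpa [E] using this
  have heq : (μH[(d:ℝ)] : Measure E) =
      (Measure.addHaarScalarFactor (μH[(d:ℝ)] : Measure E) (volume : Measure E) : ENNReal) •
        (volume : Measure E) :=
    Measure.isAddLeftInvariant_eq_smul _ _
  set c : NNReal := Measure.addHaarScalarFactor (μH[(d:ℝ)] : Measure E) (volume : Measure E)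
  have hc0 : (c : ENNReal) ≠ 0 := by
    intro h0
    have hb : (μH[(d:ℝ)] : Measure E) (ball 0 1) = 0 := by
      rw [heq]; simp [h0]
    have : (0:ENNReal) < (μH[(d:ℝ)] : Measure E) (ball 0 1) :=
      measure_ball_pos _ _ one_pos
    simp [hb] at this
  have key : ∀ s : Set E, (μH[(d:ℝ)] : Measure E) s = (c : ENNReal) * volume s := by
    intro s; rw [heq]; rfl
  have him := h.hausdorffMeasure_image_le (d := (d:ℝ)) (Nat.cast_nonneg d)
  rw [key, key] at him
  rw [mul_left_comm] at him
  exact (ENNReal.mul_le_mul_iff_right hc0 ENNReal.coe_ne_top).mp him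

open Metric Pointwise RealInnerProductSpace

set_option maxHeartbeats 1000000

theorem stmt_10 (d : ℕ) (hd : 1 ≤ d) (α lam ρ M : ℝ)
    (hα0 : 0 < α) (hα1 : α < 1) (hlam : 0 < lam) (hρ : 0 < ρ) (hM : 0 < M) :
    ∃ C : ℝ, 0 < C ∧
      ∀ (γ ε K τ₁ : ℝ), 0 < γ → γ ≤ 1 → 0 ≤ ε → 1 ≤ K → 0 < τ₁ →
        γ ≤ lam / 4 → ε ≤ lam / 4 → ε * M ≤ 1 / 4 →
      ∀ (O : Set (EuclideanSpace ℝ (Fin d))), MeasurableSet O →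
      ∀ ω : EuclideanSpace ℝ (Fin d) → EuclideanSpace ℝ (Fin d),
        (∀ ξ ∈ O, ‖ω ξ‖ ≤ ρ) →
        (∀ ξ ∈ O, ∀ η ∈ O, ‖ξ - η‖ ≤ M * ‖ω ξ - ω η‖) →
      ∀ Ω : ℤ → EuclideanSpace ℝ (Fin d) → ℝ,
        (∀ n : ℤ, ∀ ξ ∈ O, |Ω n ξ - (|n| : ℝ) ^ α - lam| ≤ ε) →
        (∀ n : ℤ, ∀ ξ ∈ O, ∀ η ∈ O, |Ω n ξ - Ω n η| ≤ ε * ‖ξ - η‖) →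
        volume (⋃ k ∈ {k : Fin d → ℤ | ∀ i, (|k i| : ℝ) ≤ K}, ⋃ n : ℤ,
            {ξ ∈ O | |(∑ i, (k i : ℝ) * ω ξ i) + Ω n ξ| ≤ γ * K ^ (-(2 * τ₁))}) ≤
          ENNReal.ofReal (C * γ ^ ((1 : ℝ) / 2) * K ^ (-(τ₁ - d - 2 / α))) := by

  classical
  set Vb : ENNReal := volume (ball (0 : EuclideanSpace ℝ (Fin d)) (2*ρ + lam)) with hVb
  set Vr : ℝ := Vb.toReal with hVr
  have hVbne : Vb ≠ ⊤ := measure_ball_lt_top.ne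
  have hVrpos : 0 < Vr := by
    rw [hVr]
    apply ENNReal.toReal_pos _ hVbne
    exact (measure_ball_pos _ _ (by positivity)).ne'
  have hVbr : Vb = ENNReal.ofReal Vr := (ENNReal.ofReal_toReal hVbne).symm
  have hdr : (0:ℝ) < (d:ℝ) := by exact_mod_cast Nat.lt_of_lt_of_le Nat.zero_lt_one hd
  set c₂ : ℝ := 2*((d:ℝ)*ρ+lam)^(α⁻¹)+3 with hc₂
  have hc₂pos : 0 < c₂ := by
    have : (0:ℝ) ≤ ((d:ℝ)*ρ+lam)^(α⁻¹) := Real.rpow_nonneg (by positivity) _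
    rw [hc₂]; linarith
  refine ⟨(3:ℝ)^(d:ℕ) * c₂ * (M^(d:ℝ) * (3/ρ) * Vr), by positivity, ?_⟩
  intro γ ε K τ₁ hγ hγ1 hε hK hτ hγlam hεlam hεM O hO ω hωbd hωlip Ω hΩbd hΩlip
  have hK0 : (0:ℝ) < K := lt_of_lt_of_le one_pos hK
  set δ : ℝ := γ * K ^ (-(2 * τ₁)) with hδdef
  have hδpos : 0 < δ := by
    rw [hδdef]
    exact mul_pos hγ (Real.rpow_pos_of_pos hK0 _)
  have hδγ : δ ≤ γ := by
    rw [hδdef]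
    nth_rewrite 2 [← mul_one γ]
    exact mul_le_mul_of_nonneg_left
      (Real.rpow_le_one_of_one_le_of_nonpos hK (by linarith)) hγ.le
  have hδlam : δ ≤ lam/4 := le_trans hδγ hγlam
  set S : (Fin d → ℤ) → ℤ → Set (EuclideanSpace ℝ (Fin d)) := fun k n =>
    {ξ ∈ O | |(∑ i, (k i : ℝ) * ω ξ i) + Ω n ξ| ≤ δ} with hS
  set B : ENNReal := ENNReal.ofReal (M ^ (d:ℝ)) * (ENNReal.ofReal (3*δ/ρ) * Vb) with hB
  -- per-set volume bound
  have hvolS : ∀ k n, volume (S k n) ≤ B := by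
    intro k n
    by_cases hk0 : ∀ i, k i = 0
    · have hempty : S k n = ∅ := by
        ext ξ
        simp only [hS, Set.mem_sep_iff, Set.mem_empty_iff_false, iff_false, not_and]
        intro hξO hξ
        have hsum : (∑ i, (k i : ℝ) * ω ξ i) = 0 := by simp [hk0]
        rw [hsum, zero_add] at hξ
        have h1 := hΩbd n ξ hξO
        have h2 : (0:ℝ) ≤ (|n|:ℝ)^α := Real.rpow_nonneg (abs_nonneg _) _
        rw [abs_le] at hξ h1
        linarith
      rw [hempty]
      simp
    · push_neg at hk0
      obtain ⟨i₀, hi₀⟩ := hk0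
      set kv : EuclideanSpace ℝ (Fin d) := WithLp.toLp 2 (fun i => (k i : ℝ)) with hkv
      have hkk : ∀ ξ, ⟪kv, ω ξ⟫ = ∑ i, (k i : ℝ) * ω ξ i := by
        intro ξ; simp [PiLp.inner_apply, hkv]
        exact Finset.sum_congr rfl fun i _ => mul_comm _ _
      have hkv1 : 1 ≤ ‖kv‖ := by
        have h1 : (1:ℝ) ≤ ((k i₀ : ℝ))^2 := by
          have h0 : (1:ℤ) ≤ |k i₀| := Int.one_le_abs hi₀
          have h2 : (1:ℝ) ≤ |(k i₀ : ℝ)| := by exact_mod_cast h0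
          nlinarith [abs_nonneg (k i₀ : ℝ), sq_abs (k i₀ : ℝ)]
        have h2 : ((k i₀:ℝ))^2 ≤ ∑ i, ((k i:ℝ))^2 :=
          Finset.single_le_sum (f := fun i => ((k i:ℝ))^2)
            (fun i _ => sq_nonneg _) (Finset.mem_univ i₀)
        have h3 : ⟪kv, kv⟫ = ∑ i, ((k i:ℝ))^2 := by
          rw [hkv, PiLp.inner_apply]; simp [sq]
        have h4 : ⟪kv, kv⟫ = ‖kv‖^2 := real_inner_self_eq_norm_sq kv
        nlinarith [norm_nonneg kv]
      set A : Set (EuclideanSpace ℝ (Fin d)) := ω '' (S k n) with hA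
      have hSsubO : S k n ⊆ O := fun ξ hξ => hξ.1
      have hAρ : ∀ a ∈ A, ‖a‖ ≤ ρ := by
        rintro a ⟨ξ, hξ, rfl⟩; exact hωbd ξ (hSsubO hξ)
      have hsepA : ∀ a ∈ A, ∀ b ∈ A, |⟪kv, a - b⟫| ≤ 2*δ + ‖a-b‖/4 := by
        rintro a ⟨ξ, hξ, rfl⟩ b ⟨η, hη, rfl⟩
        have hξO := hSsubO hξ
        have hηO := hSsubO hη
        have e1 : ⟪kv, ω ξ - ω η⟫ = (((∑ i, (k i:ℝ) * ω ξ i) + Ω n ξ)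
            - ((∑ i, (k i:ℝ) * ω η i) + Ω n η)) - (Ω n ξ - Ω n η) := by
          rw [inner_sub_right, hkk, hkk]; ring
        have h2 := hξ.2
        have h3 := hη.2
        have h4 := hΩlip n ξ hξO η hηO
        have h5 := hωlip ξ hξO η hηO
        have h6 : ε * ‖ξ - η‖ ≤ (1/4) * ‖ω ξ - ω η‖ := by
          calc ε * ‖ξ - η‖ ≤ ε * (M * ‖ω ξ - ω η‖) := mul_le_mul_of_nonneg_left h5 hε
            _ = (ε*M) * ‖ω ξ - ω η‖ := by ring
            _ ≤ (1/4) * ‖ω ξ - ω η‖ := mul_le_mul_of_nonneg_right hεM (norm_nonneg _)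
        rw [e1]
        have t1 : |(((∑ i, (k i:ℝ) * ω ξ i) + Ω n ξ)
            - ((∑ i, (k i:ℝ) * ω η i) + Ω n η)) - (Ω n ξ - Ω n η)|
            ≤ |((∑ i, (k i:ℝ) * ω ξ i) + Ω n ξ)| + |((∑ i, (k i:ℝ) * ω η i) + Ω n η)|
              + |Ω n ξ - Ω n η| := by
          calc _ ≤ |(((∑ i, (k i:ℝ) * ω ξ i) + Ω n ξ)
              - ((∑ i, (k i:ℝ) * ω η i) + Ω n η))| + |Ω n ξ - Ω n η| := abs_sub _ _
            _ ≤ _ := by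
              have := abs_sub ((∑ i, (k i:ℝ) * ω ξ i) + Ω n ξ)
                ((∑ i, (k i:ℝ) * ω η i) + Ω n η)
              linarith
        linarith [t1, h2, h3, h4, h6]
      have hvolA := slab_bound A kv hkv1 δ ρ hδpos hρ hAρ hsepA
      have hinj : ∀ ξ ∈ S k n, ∀ η ∈ S k n, ω ξ = ω η → ξ = η := by
        intro ξ hξ η hη h
        have h1 := hωlip ξ (hSsubO hξ) η (hSsubO hη)
        rw [h, sub_self, norm_zero, mul_zero] at h1
        exact sub_eq_zero.mp (norm_le_zero_iff.mp h1)
      set g : EuclideanSpace ℝ (Fin d) → EuclideanSpace ℝ (Fin d) :=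
        fun y => if h : ∃ ξ ∈ S k n, ω ξ = y then h.choose else 0 with hg
      have hgω : ∀ ξ ∈ S k n, g (ω ξ) = ξ := by
        intro ξ hξ
        have hex : ∃ ζ ∈ S k n, ω ζ = ω ξ := ⟨ξ, hξ, rfl⟩
        rw [hg]
        simp only [dif_pos hex]
        obtain ⟨hc1, hc2⟩ := hex.choose_spec
        exact hinj _ hc1 _ hξ hc2
      have hgS : S k n ⊆ g '' A := by
        intro ξ hξ
        exact ⟨ω ξ, Set.mem_image_of_mem ω hξ, hgω ξ hξ⟩
      have hglip : LipschitzOnWith M.toNNReal g A := by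
        apply LipschitzOnWith.of_dist_le_mul
        rintro x ⟨ξ, hξ, rfl⟩ y ⟨η, hη, rfl⟩
        rw [hgω ξ hξ, hgω η hη, dist_eq_norm, dist_eq_norm,
          Real.coe_toNNReal _ hM.le]
        exact hωlip ξ (hSsubO hξ) η (hSsubO hη)
      have hMco : ((M.toNNReal : ENNReal)) ^ (d:ℝ) = ENNReal.ofReal (M ^ (d:ℝ)) := by
        rw [show ((M.toNNReal : ENNReal)) = ENNReal.ofReal M from rfl,
          ENNReal.ofReal_rpow_of_pos hM]
      calc volume (S k n) ≤ volume (g '' A) := measure_mono hgS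
        _ ≤ (M.toNNReal : ENNReal) ^ (d:ℝ) * volume A := lip_image_vol hglip
        _ ≤ (M.toNNReal : ENNReal) ^ (d:ℝ) * (ENNReal.ofReal (3*δ/ρ) *
            volume (ball (0 : EuclideanSpace ℝ (Fin d)) (2*ρ + 3*δ))) :=
            mul_le_mul_right hvolA _
        _ ≤ B := by
            rw [hB, hMco]
            refine mul_le_mul_right (mul_le_mul_right ?_ _) _
            rw [hVb]
            exact measure_mono (ball_subset_ball (by linarith))
  -- bound on the index n
  set X : ℝ := ((d:ℝ)*ρ+lam)*K with hX
  have hXpos : 0 < X := by rw [hX]; positivity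
  set Z : ℕ := ⌈X ^ (α⁻¹)⌉₊ with hZ
  have hn : ∀ k n, (∀ i, (|k i| : ℝ) ≤ K) → (S k n).Nonempty → |n| ≤ (Z:ℤ) := by
    intro k n hk ⟨ξ, hξ⟩
    obtain ⟨hξO, hξ2⟩ := hξ
    set kv : EuclideanSpace ℝ (Fin d) := WithLp.toLp 2 (fun i => (k i : ℝ)) with hkv
    have hkk : ⟪kv, ω ξ⟫ = ∑ i, (k i : ℝ) * ω ξ i := by
      simp [PiLp.inner_apply, hkv]
      exact Finset.sum_congr rfl fun i _ => mul_comm _ _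
    have hkvbd : ‖kv‖ ≤ (d:ℝ)*K := by
      have h3 : ⟪kv, kv⟫ = ∑ i, ((k i:ℝ))^2 := by
        rw [hkv, PiLp.inner_apply]; simp [sq]
      have h4 : ⟪kv, kv⟫ = ‖kv‖^2 := real_inner_self_eq_norm_sq kv
      have h5 : ∑ i, ((k i:ℝ))^2 ≤ ∑ _i : Fin d, K^2 := by
        apply Finset.sum_le_sum
        intro i _
        have := hk i
        nlinarith [abs_nonneg (k i : ℝ), sq_abs (k i : ℝ)]
      have h6 : ∑ _i : Fin d, K^2 = (d:ℝ) * K^2 := by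
        rw [Finset.sum_const]
        simp [nsmul_eq_mul]
      have hd1 : (1:ℝ) ≤ (d:ℝ) := by exact_mod_cast hd
      have h7 : (d:ℝ) * K^2 ≤ ((d:ℝ)*K)^2 := by nlinarith [hd1, hK0]
      have h8 : ‖kv‖^2 ≤ ((d:ℝ)*K)^2 := by linarith [h3, h4, h5, h6, h7]
      nlinarith [norm_nonneg kv, mul_pos hdr hK0, h8]
    have hsumbd : |∑ i, (k i : ℝ) * ω ξ i| ≤ (d:ℝ)*ρ*K := by
      rw [← hkk]
      calc |⟪kv, ω ξ⟫| ≤ ‖kv‖ * ‖ω ξ‖ := abs_real_inner_le_norm _ _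
        _ ≤ ((d:ℝ)*K) * ρ := by
            apply mul_le_mul hkvbd (hωbd ξ hξO) (norm_nonneg _) (by positivity)
        _ = (d:ℝ)*ρ*K := by ring
    have hΩ := hΩbd n ξ hξO
    rw [abs_le] at hΩ hξ2 hsumbd
    have hna : (|n|:ℝ)^α ≤ X := by
      rw [hX]
      have h2 : (0:ℝ) ≤ (|n|:ℝ)^α := Real.rpow_nonneg (abs_nonneg _) _
      nlinarith [hεlam, hδlam, hlam]
    have hnr : (|n|:ℝ) ≤ X ^ (α⁻¹) := by
      have h1 : ((|n|:ℝ)^α)^(α⁻¹) ≤ X^(α⁻¹) :=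
        Real.rpow_le_rpow (Real.rpow_nonneg (abs_nonneg _) _) hna
          (le_of_lt (inv_pos.mpr hα0))
      rwa [← Real.rpow_mul (abs_nonneg _), mul_inv_cancel₀ hα0.ne',
        Real.rpow_one] at h1
    have : (|n|:ℝ) ≤ (Z:ℝ) := le_trans hnr (Nat.le_ceil _)
    exact_mod_cast this
  set Fk : Finset (Fin d → ℤ) := Fintype.piFinset (fun _ : Fin d => Finset.Icc (-⌊K⌋) ⌊K⌋)
    with hFk
  set Fn : Finset ℤ := Finset.Icc (-(Z:ℤ)) (Z:ℤ) with hFn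
  have hcover : (⋃ k ∈ {k : Fin d → ℤ | ∀ i, (|k i| : ℝ) ≤ K}, ⋃ n : ℤ,
      {ξ ∈ O | |(∑ i, (k i : ℝ) * ω ξ i) + Ω n ξ| ≤ δ}) ⊆
      ⋃ k ∈ Fk, ⋃ n ∈ Fn, S k n := by
    intro ξ hξ
    simp only [Set.mem_iUnion, Set.mem_setOf_eq] at hξ ⊢
    obtain ⟨k, hk, n, hmem⟩ := hξ
    have hkF : k ∈ Fk := by
      rw [hFk, Fintype.mem_piFinset]
      intro i
      rw [Finset.mem_Icc, ← abs_le]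
      exact Int.le_floor.mpr (by exact_mod_cast hk i)
    have hnF : n ∈ Fn := by
      rw [hFn, Finset.mem_Icc, ← abs_le]
      exact hn k n hk ⟨ξ, hmem⟩
    exact ⟨k, hkF, n, hnF, hmem⟩
  have hsum : volume (⋃ k ∈ Fk, ⋃ n ∈ Fn, S k n)
      ≤ (Fk.card : ENNReal) * ((Fn.card : ENNReal) * B) := by
    calc volume (⋃ k ∈ Fk, ⋃ n ∈ Fn, S k n) ≤ ∑ k ∈ Fk, volume (⋃ n ∈ Fn, S k n) :=
        measure_biUnion_finset_le _ _
      _ ≤ ∑ k ∈ Fk, ∑ n ∈ Fn, volume (S k n) :=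
        Finset.sum_le_sum fun k _ => measure_biUnion_finset_le _ _
      _ ≤ ∑ k ∈ Fk, ∑ n ∈ Fn, B :=
        Finset.sum_le_sum fun k _ => Finset.sum_le_sum fun n _ => hvolS k n
      _ = (Fk.card : ENNReal) * ((Fn.card : ENNReal) * B) := by
        simp [Finset.sum_const, nsmul_eq_mul, mul_assoc]
  refine le_trans (measure_mono hcover) (le_trans hsum ?_)
  -- cardinality bounds
  have hKfl1 : (1:ℤ) ≤ ⌊K⌋ := Int.le_floor.mpr (by exact_mod_cast hK)
  have hIccK : ((Finset.Icc (-⌊K⌋) ⌊K⌋).card : ℝ) ≤ 3*K := by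
    rw [Int.card_Icc]
    have h1 : (⌊K⌋:ℝ) ≤ K := Int.floor_le K
    have h2 : ((⌊K⌋ + 1 - -⌊K⌋).toNat : ℤ) = 2*⌊K⌋+1 := by
      rw [Int.toNat_of_nonneg (by omega)]; ring
    have h3 : (((⌊K⌋ + 1 - -⌊K⌋).toNat : ℕ) : ℝ) = 2*(⌊K⌋:ℝ)+1 := by
      exact_mod_cast congrArg (fun z : ℤ => (z:ℝ)) h2
    rw [h3]
    linarith
  have hFkbd : (Fk.card:ℝ) ≤ (3*K)^(d:ℕ) := by
    rw [hFk, Fintype.card_piFinset]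
    rw [Finset.prod_const, Finset.card_univ, Fintype.card_fin]
    push_cast
    exact pow_le_pow_left₀ (Nat.cast_nonneg _) hIccK d
  have hK1r : (1:ℝ) ≤ K ^ (α⁻¹) := by
    calc (1:ℝ) = K^(0:ℝ) := by simp
      _ ≤ K^(α⁻¹) := Real.rpow_le_rpow_of_exponent_le hK (le_of_lt (inv_pos.mpr hα0))
  have hZr : (Z:ℝ) ≤ X^(α⁻¹) + 1 :=
    (Nat.ceil_lt_add_one (Real.rpow_nonneg hXpos.le (α⁻¹))).le
  have hXsplit : X^(α⁻¹) = ((d:ℝ)*ρ+lam)^(α⁻¹) * K^(α⁻¹) := by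
    rw [hX, Real.mul_rpow (by positivity) hK0.le]
  have hFnbd : (Fn.card:ℝ) ≤ c₂ * K^(α⁻¹) := by
    have h2 : ((Z:ℤ) + 1 - -(Z:ℤ)).toNat = 2*Z+1 := by omega
    have h1 : (Fn.card : ℝ) = 2*(Z:ℝ)+1 := by
      rw [hFn, Int.card_Icc, h2]; push_cast; ring
    rw [h1, hc₂]
    have h4 : (0:ℝ) ≤ ((d:ℝ)*ρ+lam)^(α⁻¹) := Real.rpow_nonneg (by positivity) _
    have h5 : X^(α⁻¹) ≤ ((d:ℝ)*ρ+lam)^(α⁻¹) * K^(α⁻¹) := le_of_eq hXsplit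
    nlinarith [hZr, hK1r, h4, h5]
  -- put everything together
  have hBof : B = ENNReal.ofReal (M^(d:ℝ) * (3*δ/ρ * Vr)) := by
    rw [hB, hVbr, ← ENNReal.ofReal_mul (by positivity), ← ENNReal.ofReal_mul
      (Real.rpow_nonneg hM.le _)]
  have hcast : (Fk.card : ENNReal) * ((Fn.card : ENNReal) * B)
      = ENNReal.ofReal ((Fk.card:ℝ) * ((Fn.card:ℝ) * (M^(d:ℝ) * (3*δ/ρ * Vr)))) := by
    rw [hBof, ← ENNReal.ofReal_natCast Fk.card, ← ENNReal.ofReal_natCast Fn.card,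
      ← ENNReal.ofReal_mul (Nat.cast_nonneg _), ← ENNReal.ofReal_mul (Nat.cast_nonneg _)]
  rw [hcast]
  apply ENNReal.ofReal_le_ofReal
  have ht : (0:ℝ) ≤ M^(d:ℝ) * (3*δ/ρ * Vr) := by positivity
  have step1 : (Fk.card:ℝ) * ((Fn.card:ℝ) * (M^(d:ℝ) * (3*δ/ρ * Vr)))
      ≤ ((3*K)^(d:ℕ)) * ((c₂ * K^(α⁻¹)) * (M^(d:ℝ) * (3*δ/ρ * Vr))) := by
    have hnn1 : (0:ℝ) ≤ (Fn.card:ℝ) * (M^(d:ℝ) * (3*δ/ρ * Vr)) :=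
      mul_nonneg (Nat.cast_nonneg _) ht
    calc (Fk.card:ℝ) * ((Fn.card:ℝ) * (M^(d:ℝ) * (3*δ/ρ * Vr)))
        ≤ ((3*K)^(d:ℕ)) * ((Fn.card:ℝ) * (M^(d:ℝ) * (3*δ/ρ * Vr))) :=
          mul_le_mul_of_nonneg_right hFkbd hnn1
      _ ≤ ((3*K)^(d:ℕ)) * ((c₂ * K^(α⁻¹)) * (M^(d:ℝ) * (3*δ/ρ * Vr))) := by
          apply mul_le_mul_of_nonneg_left _ (by positivity)
          exact mul_le_mul_of_nonneg_right hFnbd ht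
  have step2 : ((3*K)^(d:ℕ)) * ((c₂ * K^(α⁻¹)) * (M^(d:ℝ) * (3*δ/ρ * Vr)))
      = ((3:ℝ)^(d:ℕ) * c₂ * (M^(d:ℝ) * (3/ρ) * Vr)) *
        (γ * (K^((d:ℕ):ℝ) * (K^(α⁻¹) * K^(-(2*τ₁))))) := by
    rw [hδdef, mul_pow, Real.rpow_natCast K d]
    ring
  have step3 : K^((d:ℕ):ℝ) * (K^(α⁻¹) * K^(-(2*τ₁))) = K^(((d:ℕ):ℝ) + α⁻¹ + -(2*τ₁)) := by
    rw [← Real.rpow_add hK0, ← Real.rpow_add hK0]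
    ring_nf
  have e3 : K^(((d:ℕ):ℝ) + α⁻¹ + -(2*τ₁)) ≤ K^(-(τ₁ - (d:ℕ) - 2/α)) := by
    apply Real.rpow_le_rpow_of_exponent_le hK
    have h1 : 0 < α⁻¹ := inv_pos.mpr hα0
    rw [div_eq_mul_inv]
    linarith
  have e4 : γ ≤ γ^((1:ℝ)/2) := by
    nth_rewrite 1 [← Real.rpow_one γ]
    exact Real.rpow_le_rpow_of_exponent_ge hγ hγ1 (by norm_num)
  have hA0 : (0:ℝ) ≤ (3:ℝ)^(d:ℕ) * c₂ * (M^(d:ℝ) * (3/ρ) * Vr) := by positivity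
  calc (Fk.card:ℝ) * ((Fn.card:ℝ) * (M^(d:ℝ) * (3*δ/ρ * Vr)))
      ≤ ((3*K)^(d:ℕ)) * ((c₂ * K^(α⁻¹)) * (M^(d:ℝ) * (3*δ/ρ * Vr))) := step1
    _ = ((3:ℝ)^(d:ℕ) * c₂ * (M^(d:ℝ) * (3/ρ) * Vr)) *
        (γ * K^(((d:ℕ):ℝ) + α⁻¹ + -(2*τ₁))) := by rw [step2, step3]
    _ ≤ ((3:ℝ)^(d:ℕ) * c₂ * (M^(d:ℝ) * (3/ρ) * Vr)) *
        (γ^((1:ℝ)/2) * K^(-(τ₁ - (d:ℕ) - 2/α))) := by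
        apply mul_le_mul_of_nonneg_left _ hA0
        exact mul_le_mul e4 e3 (Real.rpow_nonneg hK0.le _) (Real.rpow_nonneg hγ.le _)
    _ = (3:ℝ)^(d:ℕ) * c₂ * (M^(d:ℝ) * (3/ρ) * Vr) * γ^((1:ℝ)/2) *
        K^(-(τ₁ - (d:ℕ) - 2/α)) := by ring
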